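/- Let the MM be ARFIMA(p,d,0) applied to an ARFIMA(0,d₀,q₀) TDGP, so that C(z) = θ₀(z)φ(z) is a polynomial of degree q̄ = q₀ + p with coefficients c_j = Σ_r θ_{(j-r)0} φ_r. Then the limiting criterion factor K(η) = Σ_{j=0}^{q̄} c_j² + 2 Σ_{0≤k<j≤q̄} c_j c_k ρ(j-k) is an exact finite expression (no truncation error), where ρ(h) = Π_{i=1}^h (δ+i-1)/(i-δ) and δ = d₀ - d. -/

import Mathlib

open Real MeasureTheory Finset

namespace ExactKAux

noncomputable def w (δ x : ℝ) : ℝ := (2 * Real.sin (x / 2)) ^ (-(2 * δ))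

lemma base_pos {x : ℝ} (hx : x ∈ Set.Ioc 0 π) : 0 < 2 * Real.sin (x / 2) := by
  have := Real.sin_pos_of_pos_of_lt_pi (x := x/2) (by linarith [hx.1]) (by linarith [hx.2, pi_pos])
  linarith

lemma w_contOn (δ : ℝ) : ContinuousOn (w δ) (Set.Ioc 0 π) := by
  intro x hx
  exact ((continuous_const.mul (Real.continuous_sin.comp (continuous_id.div_const 2))).continuousAt.rpow_const
    (Or.inl (base_pos hx).ne')).continuousWithinAt

lemma w_aesm (δ : ℝ) : AEStronglyMeasurable (w δ) (volume.restrict (Set.Ioc 0 π)) :=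
  (w_contOn δ).aestronglyMeasurable measurableSet_Ioc

lemma w_integrable {δ : ℝ} (hδ : |δ| < 1/2) : IntervalIntegrable (w δ) volume 0 π := by
  have hd := abs_lt.1 hδ
  have hdom : IntervalIntegrable (fun x : ℝ => (1 + (2/π) ^ (-(2*δ))) * x ^ (-(2*δ))) volume 0 π :=
    (intervalIntegral.intervalIntegrable_rpow' (by linarith)).const_mul _
  rw [intervalIntegrable_iff_integrableOn_Ioc_of_le pi_pos.le] at hdom ⊢
  refine Integrable.mono hdom (w_aesm δ) ?_
  filter_upwards [ae_restrict_mem measurableSet_Ioc] with x hx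
  have hx0 : 0 < x := hx.1
  have hx2 : x / 2 ≤ π / 2 := by linarith [hx.2]
  have hs_pos : 0 < 2 * Real.sin (x/2) := base_pos hx
  have hlow : (2/π) * x ≤ 2 * Real.sin (x/2) := by
    have := Real.mul_le_sin (x := x/2) (by linarith) hx2
    calc (2/π) * x = 2 * (2/π * (x/2)) := by ring
    _ ≤ 2 * Real.sin (x/2) := by linarith
  have hup : 2 * Real.sin (x/2) ≤ x := by
    have := Real.sin_le (show (0:ℝ) ≤ x/2 by linarith)
    linarith
  have hxpow : (0:ℝ) ≤ x ^ (-(2*δ)) := Real.rpow_nonneg hx0.le _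
  have hbnd : w δ x ≤ (1 + (2/π) ^ (-(2*δ))) * x ^ (-(2*δ)) := by
    rcases le_or_gt δ 0 with hneg | hpos
    · have h1 : w δ x ≤ x ^ (-(2*δ)) :=
        Real.rpow_le_rpow hs_pos.le hup (by linarith)
      nlinarith [Real.rpow_nonneg (show (0:ℝ) ≤ 2/π by positivity) (-(2*δ))]
    · have h1 : w δ x ≤ ((2/π) * x) ^ (-(2*δ)) :=
        Real.rpow_le_rpow_of_nonpos (by positivity) hlow (by linarith)
      have h2 : ((2/π) * x) ^ (-(2*δ)) = (2/π) ^ (-(2*δ)) * x ^ (-(2*δ)) :=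
        Real.mul_rpow (by positivity) hx0.le
      nlinarith
  have hwnn : 0 ≤ w δ x := Real.rpow_nonneg hs_pos.le _
  simp only [Real.norm_eq_abs]
  rw [abs_of_nonneg hwnn, abs_of_nonneg (by positivity)]
  exact hbnd

lemma wcos_integrable {δ : ℝ} (hδ : |δ| < 1/2) (b : ℝ) :
    IntervalIntegrable (fun x => Real.cos (b * x) * w δ x) volume 0 π := by
  have haesm : AEStronglyMeasurable (fun x => Real.cos (b * x) * w δ x)
      (volume.restrict (Set.Ioc 0 π)) :=
    ((Real.continuous_cos.comp (continuous_const.mul continuous_id)).continuousOn.mul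
      (w_contOn δ)).aestronglyMeasurable measurableSet_Ioc
  have h0 : Set.uIoc (0:ℝ) π = Set.Ioc 0 π := Set.uIoc_of_le pi_pos.le
  refine (w_integrable hδ).mono_fun (by rwa [h0]) ?_
  refine Filter.Eventually.of_forall fun x => ?_
  simp only [Real.norm_eq_abs, abs_mul]
  calc |Real.cos (b*x)| * |w δ x| ≤ 1 * |w δ x| :=
        mul_le_mul_of_nonneg_right (Real.abs_cos_le_one _) (abs_nonneg _)
  _ = |w δ x| := one_mul _

lemma real_beta {a b : ℝ} (ha : 0 < a) (hb : 0 < b) :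
    Real.Gamma a * Real.Gamma b
      = Real.Gamma (a + b) * ∫ t in (0:ℝ)..1, t ^ (a-1) * (1-t) ^ (b-1) := by
  have key := Complex.Gamma_mul_Gamma_eq_betaIntegral (s := (a:ℂ)) (t := (b:ℂ))
    (by simpa using ha) (by simpa using hb)
  rw [Complex.betaIntegral] at key
  have hint : (∫ x in (0:ℝ)..1, (x:ℂ) ^ ((a:ℂ)-1) * (1-(x:ℂ)) ^ ((b:ℂ)-1))
      = ((∫ t in (0:ℝ)..1, t ^ (a-1) * (1-t) ^ (b-1) : ℝ) : ℂ) := by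
    rw [← intervalIntegral.integral_ofReal]
    refine intervalIntegral.integral_congr fun x hx => ?_
    rw [Set.uIcc_of_le zero_le_one] at hx
    have hx0 : (0:ℝ) ≤ x := hx.1
    have hx1 : (0:ℝ) ≤ 1 - x := by linarith [hx.2]
    rw [Complex.ofReal_mul, Complex.ofReal_cpow hx0, Complex.ofReal_cpow hx1]
    push_cast
    ring
  rw [hint, ← Complex.ofReal_add] at key
  rw [Complex.Gamma_ofReal, Complex.Gamma_ofReal, Complex.Gamma_ofReal,
    ← Complex.ofReal_mul, ← Complex.ofReal_mul] at key
  exact_mod_cast key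

noncomputable def I0val (δ : ℝ) : ℝ := π * (Real.Gamma (1 - 2 * δ) / (Real.Gamma (1 - δ))^2)

lemma I0 {δ : ℝ} (hδ : |δ| < 1/2) :
    ∫ x in (0:ℝ)..π, w δ x = I0val δ := by
  rw [I0val]
  have hd := abs_lt.1 hδ
  set g : ℝ → ℝ := fun t => (2:ℝ) ^ (-(2*δ)) * (t ^ (-δ-1/2) * (1-t) ^ (-(1:ℝ)/2)) with hg
  set f : ℝ → ℝ := fun x => Real.sin (x/2) ^ 2 with hf
  -- change of variables
  have hderiv : ∀ x ∈ Set.Ioo (0:ℝ) π,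
      HasDerivWithinAt f (Real.sin (x/2) * Real.cos (x/2)) (Set.Ioo (0:ℝ) π) x := by
    intro x hx
    have h1 : HasDerivAt (fun x : ℝ => Real.sin (x/2)) (Real.cos (x/2) * (1/2)) x := by
      exact (Real.hasDerivAt_sin (x/2)).comp x ((hasDerivAt_id x).div_const 2)
    have h5 := (h1.pow 2).hasDerivWithinAt (s := Set.Ioo (0:ℝ) π)
    exact h5.congr_deriv (by rw [show (2:ℕ) - 1 = 1 from rfl]; push_cast; ring)
  have hinj : Set.InjOn f (Set.Ioo 0 π) := by
    intro x hx y hy hxy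
    have hsx : 0 ≤ Real.sin (x/2) := Real.sin_nonneg_of_nonneg_of_le_pi (by linarith [hx.1]) (by linarith [hx.2, pi_pos])
    have hsy : 0 ≤ Real.sin (y/2) := Real.sin_nonneg_of_nonneg_of_le_pi (by linarith [hy.1]) (by linarith [hy.2, pi_pos])
    have hs : Real.sin (x/2) = Real.sin (y/2) := by
      have := hxy
      simp only [hf] at this
      nlinarith
    have : x/2 = y/2 := by
      apply Real.injOn_sin ⟨by linarith [hx.1, pi_pos], by linarith [hx.2]⟩
        ⟨by linarith [hy.1, pi_pos], by linarith [hy.2]⟩ hs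
    linarith
  have himg : f '' Set.Ioo 0 π = Set.Ioo 0 1 := by
    ext t
    constructor
    · rintro ⟨x, hx, rfl⟩
      have h1 : 0 < Real.sin (x/2) := Real.sin_pos_of_pos_of_lt_pi (by linarith [hx.1]) (by linarith [hx.2, pi_pos])
      have h2 : Real.sin (x/2) < 1 := by
        have : Real.sin (x/2) < Real.sin (π/2) := by
          apply Real.strictMonoOn_sin ⟨by linarith [hx.1, pi_pos], by linarith [hx.2]⟩
            ⟨by linarith [pi_pos], by linarith⟩ (by linarith [hx.2])
        simpa using this
      simp only [hf]
      exact ⟨by positivity, by nlinarith⟩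
    · rintro ht
      refine ⟨2 * Real.arcsin (Real.sqrt t), ?_, ?_⟩
      · have h1 : 0 < Real.arcsin (Real.sqrt t) := Real.arcsin_pos.2 (Real.sqrt_pos.2 ht.1)
        have hlt1 : Real.sqrt t < 1 := by
          rw [show (1:ℝ) = Real.sqrt 1 by simp]
          exact Real.sqrt_lt_sqrt ht.1.le ht.2
        have h2 : Real.arcsin (Real.sqrt t) < π/2 := Real.arcsin_lt_pi_div_two.2 hlt1
        constructor <;> [linarith; linarith]
      · have hle1 : Real.sqrt t ≤ 1 := by
          rw [show (1:ℝ) = Real.sqrt 1 by simp]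
          exact Real.sqrt_le_sqrt ht.2.le
        simp only [hf]
        rw [show 2 * Real.arcsin (Real.sqrt t) / 2 = Real.arcsin (Real.sqrt t) by ring,
          Real.sin_arcsin (by linarith [Real.sqrt_nonneg t]) hle1, Real.sq_sqrt ht.1.le]
  have cov := integral_image_eq_integral_abs_deriv_smul measurableSet_Ioo hderiv hinj g
  rw [himg] at cov
  -- identify the right side of cov with ∫ w on Ioo
  have hcongr : ∀ x ∈ Set.Ioo (0:ℝ) π,
      |Real.sin (x/2) * Real.cos (x/2)| • g (f x) = w δ x := by
    intro x hx
    have hs : 0 < Real.sin (x/2) := Real.sin_pos_of_pos_of_lt_pi (by linarith [hx.1]) (by linarith [hx.2, pi_pos])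
    have hc : 0 < Real.cos (x/2) := Real.cos_pos_of_mem_Ioo ⟨by linarith [hx.1, pi_pos], by linarith [hx.2]⟩
    have h1s : 1 - Real.sin (x/2)^2 = Real.cos (x/2)^2 := by
      have := Real.sin_sq_add_cos_sq (x/2); linarith
    simp only [hf, hg, smul_eq_mul]
    rw [h1s, abs_of_pos (by positivity)]
    rw [← Real.rpow_natCast (Real.sin (x/2)) 2, ← Real.rpow_natCast (Real.cos (x/2)) 2,
      ← Real.rpow_mul hs.le, ← Real.rpow_mul hc.le]
    push_cast
    rw [show (2:ℝ) * (-δ - 1/2) = -(2*δ) + (-1) by ring, show (2:ℝ) * (-(1:ℝ)/2) = (-1 : ℝ) by ring]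
    rw [Real.rpow_add hs, Real.rpow_neg_one, Real.rpow_neg_one]
    have hw : w δ x = (2:ℝ) ^ (-(2*δ)) * Real.sin (x/2) ^ (-(2*δ)) := by
      rw [w, Real.mul_rpow (by norm_num) hs.le]
    rw [hw]
    field_simp <;> ring
  have hIoo : ∫ x in Set.Ioo (0:ℝ) π, |Real.sin (x/2) * Real.cos (x/2)| • g (f x)
      = ∫ x in Set.Ioo (0:ℝ) π, w δ x :=
    setIntegral_congr_fun measurableSet_Ioo hcongr
  -- left side of cov is the Beta integral
  have hbeta : ∫ t in Set.Ioo (0:ℝ) 1, g t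
      = (2:ℝ) ^ (-(2*δ)) * (Real.Gamma (1/2 - δ) * Real.Gamma (1/2) / Real.Gamma (1 - δ)) := by
    rw [← MeasureTheory.integral_Ioc_eq_integral_Ioo,
      ← intervalIntegral.integral_of_le zero_le_one]
    have : ∫ t in (0:ℝ)..1, g t
        = (2:ℝ) ^ (-(2*δ)) * ∫ t in (0:ℝ)..1, t ^ ((1/2 - δ) - 1) * (1-t) ^ ((1/2:ℝ) - 1) := by
      rw [← intervalIntegral.integral_const_mul]
      refine intervalIntegral.integral_congr fun x hx => ?_
      simp only [hg]
      rw [show (1:ℝ)/2 - δ - 1 = -δ - 1/2 by ring, show (1:ℝ)/2 - 1 = -(1:ℝ)/2 by ring]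
    rw [this]
    have hbeta2 := real_beta (a := 1/2 - δ) (b := 1/2) (by linarith) (by norm_num)
    have hG : (0:ℝ) < Real.Gamma (1/2 - δ + 1/2) := Real.Gamma_pos_of_pos (by linarith)
    rw [show (1:ℝ)/2 - δ + 1/2 = 1 - δ by ring] at hbeta2 hG
    have hint : ∫ t in (0:ℝ)..1, t ^ ((1/2 - δ) - 1) * (1-t) ^ ((1/2:ℝ) - 1)
        = Real.Gamma (1/2 - δ) * Real.Gamma (1/2) / Real.Gamma (1 - δ) := by
      rw [eq_div_iff hG.ne']
      linarith [hbeta2]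
    rw [hint]
  rw [← himg] at cov
  rw [himg] at cov
  -- assemble
  have lhs_eq : ∫ x in (0:ℝ)..π, w δ x = ∫ x in Set.Ioo (0:ℝ) π, w δ x := by
    rw [intervalIntegral.integral_of_le pi_pos.le, MeasureTheory.integral_Ioc_eq_integral_Ioo]
  rw [lhs_eq, ← hIoo, ← cov, hbeta]
  -- final Gamma algebra
  have hdup := Real.Gamma_mul_Gamma_add_half (1/2 - δ)
  rw [show (1:ℝ)/2 - δ + 1/2 = 1 - δ by ring, show 2 * ((1:ℝ)/2 - δ) = 1 - 2*δ by ring,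
    show (1:ℝ) - (1 - 2*δ) = 2*δ by ring] at hdup
  have hG1 : (0:ℝ) < Real.Gamma (1 - δ) := Real.Gamma_pos_of_pos (by linarith)
  have h2 : ((2:ℝ) ^ (-(2*δ))) * ((2:ℝ) ^ (2*δ)) = 1 := by
    rw [← Real.rpow_add (by norm_num)]; norm_num
  have hGhalf : Real.Gamma (1/2) = Real.sqrt π := Real.Gamma_one_half_eq
  have hpi : Real.sqrt π * Real.sqrt π = π := Real.mul_self_sqrt pi_pos.le
  rw [hGhalf]
  have hGA : Real.Gamma (1/2 - δ) = Real.Gamma (1 - 2*δ) * (2:ℝ)^(2*δ) * Real.sqrt π / Real.Gamma (1-δ) := by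
    rw [eq_div_iff hG1.ne']; exact hdup
  rw [hGA]
  field_simp
  linear_combination (Real.Gamma (1 - 2*δ) * Real.sqrt π * Real.sqrt π) * h2 + (Real.Gamma (1 - 2*δ)) * hpi

lemma rec_step {δ : ℝ} (hδ : |δ| < 1/2) (h : ℕ) :
    ((h:ℝ) + 1 - δ) * ∫ x in (0:ℝ)..π, Real.cos (((h:ℝ)+1) * x) * w δ x
      = ((h:ℝ) + δ) * ∫ x in (0:ℝ)..π, Real.cos ((h:ℝ) * x) * w δ x := by
  have hd := abs_lt.1 hδ
  set a : ℝ := (h:ℝ) + 1 - δ with ha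
  set b : ℝ := (h:ℝ) + δ with hb
  set G : ℝ → ℝ := fun x => (2 * Real.sin (x/2)) ^ (1 - 2*δ) * Real.cos (((h:ℝ)+1/2) * x) with hG
  set G' : ℝ → ℝ := fun x => a * (Real.cos (((h:ℝ)+1) * x) * w δ x) - b * (Real.cos ((h:ℝ) * x) * w δ x) with hG'
  have hcont : ContinuousOn G (Set.Icc 0 π) := by
    apply ContinuousOn.mul
    · intro x _
      exact ((continuous_const.mul (Real.continuous_sin.comp
        (continuous_id.div_const 2))).continuousAt.rpow_const (Or.inr (by linarith))).continuousWithinAt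
    · exact (Real.continuous_cos.comp (continuous_const.mul continuous_id)).continuousOn
  have hderiv : ∀ x ∈ Set.Ioo (0:ℝ) π, HasDerivWithinAt G (G' x) (Set.Ioi x) x := by
    intro x hx
    have hs : 0 < Real.sin (x/2) :=
      Real.sin_pos_of_pos_of_lt_pi (by linarith [hx.1]) (by linarith [hx.2, pi_pos])
    have hu : 0 < 2 * Real.sin (x/2) := by linarith
    have h1 : HasDerivAt (fun x : ℝ => 2 * Real.sin (x/2)) (Real.cos (x/2)) x := by
      have := ((Real.hasDerivAt_sin (x/2)).comp x ((hasDerivAt_id x).div_const 2)).const_mul 2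
      exact this.congr_deriv (by show (2:ℝ) * (Real.cos (x/2) * (1/2)) = Real.cos (x/2); ring)
    have h2 : HasDerivAt (fun x : ℝ => (2 * Real.sin (x/2)) ^ (1 - 2*δ))
        (Real.cos (x/2) * (1 - 2*δ) * (2 * Real.sin (x/2)) ^ (1 - 2*δ - 1)) x :=
      h1.rpow_const (Or.inl hu.ne')
    have h3 : HasDerivAt (fun x : ℝ => Real.cos (((h:ℝ)+1/2) * x))
        (-(((h:ℝ)+1/2)) * Real.sin (((h:ℝ)+1/2) * x)) x := by
      have := (Real.hasDerivAt_cos (((h:ℝ)+1/2) * x)).comp x ((hasDerivAt_id x).const_mul ((h:ℝ)+1/2))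
      exact this.congr_deriv (by
        show -Real.sin (((h:ℝ)+1/2) * x) * (((h:ℝ)+1/2) * 1) = -(((h:ℝ)+1/2)) * Real.sin (((h:ℝ)+1/2) * x)
        ring)
    have h4 := h2.mul h3
    have key : Real.cos (x/2) * (1 - 2*δ) * (2 * Real.sin (x/2)) ^ (1 - 2*δ - 1) *
          Real.cos (((h:ℝ)+1/2) * x)
        + (2 * Real.sin (x/2)) ^ (1 - 2*δ) * (-(((h:ℝ)+1/2)) * Real.sin (((h:ℝ)+1/2) * x))
        = G' x := by
      have e1 : (1:ℝ) - 2*δ - 1 = -(2*δ) := by ring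
      have e2 : (2 * Real.sin (x/2)) ^ (1 - 2*δ)
          = (2 * Real.sin (x/2)) * (2 * Real.sin (x/2)) ^ (-(2*δ)) := by
        rw [show (1:ℝ) - 2*δ = 1 + -(2*δ) by ring, Real.rpow_add hu, Real.rpow_one]
      have e3 : Real.cos (((h:ℝ)+1) * x) = Real.cos (((h:ℝ)+1/2) * x) * Real.cos (x/2)
          - Real.sin (((h:ℝ)+1/2) * x) * Real.sin (x/2) := by
        rw [show ((h:ℝ)+1) * x = ((h:ℝ)+1/2) * x + x/2 by ring, Real.cos_add]
      have e4 : Real.cos ((h:ℝ) * x) = Real.cos (((h:ℝ)+1/2) * x) * Real.cos (x/2)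
          + Real.sin (((h:ℝ)+1/2) * x) * Real.sin (x/2) := by
        rw [show (h:ℝ) * x = ((h:ℝ)+1/2) * x - x/2 by ring, Real.cos_sub]
      simp only [hG', w]
      rw [e1, e2, e3, e4]
      ring
    rw [← key]
    exact h4.hasDerivWithinAt
  have hint : IntervalIntegrable G' volume 0 π :=
    ((wcos_integrable hδ ((h:ℝ)+1)).const_mul a).sub ((wcos_integrable hδ (h:ℝ)).const_mul b)
  have ftc := intervalIntegral.integral_eq_sub_of_hasDeriv_right_of_le pi_pos.le hcont hderiv hint
  have hG0 : G 0 = 0 := by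
    simp only [hG]
    rw [show (0:ℝ)/2 = 0 by norm_num, Real.sin_zero, mul_zero,
      Real.zero_rpow (ne_of_gt (show (0:ℝ) < 1 - 2*δ by linarith))]
    ring
  have hGpi : G π = 0 := by
    have hc : Real.cos (((h:ℝ)+1/2) * π) = 0 := by
      rw [show ((h:ℝ)+1/2) * π = (h:ℝ) * π + π/2 by ring, Real.cos_add, Real.cos_pi_div_two,
        Real.sin_pi_div_two, Real.sin_nat_mul_pi]
      ring
    simp only [hG, hc, mul_zero]
  rw [hG0, hGpi, sub_zero] at ftc
  have hsplit := intervalIntegral.integral_sub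
    ((wcos_integrable hδ ((h:ℝ)+1)).const_mul a) ((wcos_integrable hδ (h:ℝ)).const_mul b)
  rw [intervalIntegral.integral_const_mul, intervalIntegral.integral_const_mul] at hsplit
  rw [hsplit] at ftc
  linarith

lemma Ih {δ : ℝ} (hδ : |δ| < 1/2) (h : ℕ) :
    ∫ x in (0:ℝ)..π, Real.cos ((h:ℝ) * x) * w δ x
      = I0val δ * ∏ i ∈ Finset.Icc 1 h, ((δ + (i : ℝ) - 1) / ((i : ℝ) - δ)) := by
  have hd := abs_lt.1 hδ
  induction h with
  | zero =>
    simp only [Nat.cast_zero, zero_mul, Real.cos_zero, one_mul]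
    rw [show Finset.Icc 1 0 = (∅ : Finset ℕ) by rfl]
    simp [I0 hδ]
  | succ n ih =>
    have hpos : (0:ℝ) < (n:ℝ) + 1 - δ := by
      have : (0:ℝ) ≤ (n:ℝ) := Nat.cast_nonneg n
      linarith
    have hr := rec_step hδ n
    have : ∫ x in (0:ℝ)..π, Real.cos (((n:ℕ) + 1 : ℕ) * x) * w δ x
        = (((n:ℝ) + δ) / ((n:ℝ) + 1 - δ)) * ∫ x in (0:ℝ)..π, Real.cos ((n:ℝ) * x) * w δ x := by
      push_cast
      rw [div_mul_eq_mul_div, eq_div_iff hpos.ne', mul_comm]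
      linarith [hr]
    rw [this, ih]
    rw [Finset.prod_Icc_succ_top (Nat.succ_le_succ (Nat.zero_le n))]
    push_cast
    ring
  
lemma square_split (N : ℕ) (f : ℕ → ℕ → ℝ) (hs : ∀ j k, f j k = f k j) :
    ∑ j ∈ range N, ∑ k ∈ range N, f j k
      = ∑ j ∈ range N, f j j + 2 * ∑ j ∈ range N, ∑ k ∈ range j, f j k := by
  induction N with
  | zero => simp
  | succ n ih =>
    rw [Finset.sum_range_succ (f := fun j => ∑ k ∈ range (n+1), f j k),
      Finset.sum_range_succ (f := fun k => f n k)]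
    have h1 : ∑ j ∈ range n, ∑ k ∈ range (n+1), f j k
        = (∑ j ∈ range n, ∑ k ∈ range n, f j k) + ∑ j ∈ range n, f j n := by
      rw [← Finset.sum_add_distrib]
      exact Finset.sum_congr rfl fun j _ => Finset.sum_range_succ _ _
    have h2 : ∑ j ∈ range n, f j n = ∑ k ∈ range n, f n k :=
      Finset.sum_congr rfl fun j _ => hs j n
    rw [h1, ih, h2,
      Finset.sum_range_succ (f := fun j => f j j),
      Finset.sum_range_succ (f := fun j => ∑ k ∈ range j, f j k)]
    ring

lemma main_lemma {δ : ℝ} (hδ : |δ| < 1/2) (N : ℕ) (c : ℕ → ℝ) :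
    ∫ x in (0:ℝ)..π,
        (‖∑ j ∈ range N, ((c j : ℝ) : ℂ) *
            Complex.exp (Complex.I * (j : ℂ) * (x : ℂ))‖)^2 *
          (2 * Real.sin (x / 2)) ^ (-(2 * δ))
      = π * (Real.Gamma (1 - 2 * δ) / (Real.Gamma (1 - δ))^2) *
          ((∑ j ∈ range N, (c j)^2)
            + 2 * ∑ j ∈ range N, ∑ k ∈ range j, c j * c k *
                ∏ i ∈ Finset.Icc 1 (j - k), ((δ + (i : ℝ) - 1) / ((i : ℝ) - δ))) := by
  have hpt : ∀ x : ℝ,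
      (‖∑ j ∈ range N, ((c j : ℝ) : ℂ) *
          Complex.exp (Complex.I * (j : ℂ) * (x : ℂ))‖)^2 *
        (2 * Real.sin (x / 2)) ^ (-(2 * δ))
      = ∑ j ∈ range N, ∑ k ∈ range N,
          c j * c k * (Real.cos (((j:ℝ) - (k:ℝ)) * x) * w δ x) := by
    intro x
    have habs : (‖∑ j ∈ range N, ((c j : ℝ) : ℂ) *
          Complex.exp (Complex.I * (j : ℂ) * (x : ℂ))‖)^2
        = ∑ j ∈ range N, ∑ k ∈ range N, c j * c k * Real.cos (((j:ℝ) - (k:ℝ)) * x) := by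
      set z := ∑ j ∈ range N, ((c j : ℝ) : ℂ) * Complex.exp (Complex.I * (j : ℂ) * (x : ℂ)) with hz
      have h1 : ((‖z‖)^2 : ℝ) = (z * (starRingEnd ℂ) z).re := by
        rw [Complex.mul_conj]
        simp [Complex.sq_norm]
      rw [h1, hz, map_sum, Finset.sum_mul_sum, Complex.re_sum]
      refine Finset.sum_congr rfl fun j _ => ?_
      rw [Complex.re_sum]
      refine Finset.sum_congr rfl fun k _ => ?_
      have hterm : (((c j : ℝ) : ℂ) * Complex.exp (Complex.I * (j : ℂ) * (x : ℂ))) *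
            ((starRingEnd ℂ) (((c k : ℝ) : ℂ) * Complex.exp (Complex.I * (k : ℂ) * (x : ℂ))))
          = ((c j * c k : ℝ) : ℂ) * Complex.exp (((((j:ℝ) - (k:ℝ)) * x : ℝ) : ℂ) * Complex.I) := by
        rw [map_mul, ← Complex.exp_conj, Complex.conj_ofReal]
        rw [map_mul, map_mul, Complex.conj_I, Complex.conj_natCast, Complex.conj_ofReal]
        rw [mul_mul_mul_comm, ← Complex.exp_add]
        push_cast
        rw [show Complex.I * (j:ℂ) * (x:ℂ) + -Complex.I * (k:ℂ) * (x:ℂ)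
          = ((j:ℂ) - (k:ℂ)) * (x:ℂ) * Complex.I by ring]
      rw [hterm, Complex.re_ofReal_mul, Complex.exp_ofReal_mul_I_re]
    rw [habs, Finset.sum_mul]
    refine Finset.sum_congr rfl fun j _ => ?_
    rw [Finset.sum_mul]
    exact Finset.sum_congr rfl fun k _ => by rw [w]; ring
  simp only [hpt]
  have hprod : ∀ x : ℝ, (∑ j ∈ range N, ∑ k ∈ range N,
        c j * c k * (Real.cos (((j:ℝ) - (k:ℝ)) * x) * w δ x))
      = ∑ p ∈ (range N ×ˢ range N),
        c p.1 * c p.2 * (Real.cos (((p.1:ℝ) - (p.2:ℝ)) * x) * w δ x) := fun x =>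
    (Finset.sum_product (range N) (range N)
      (fun p => c p.1 * c p.2 * (Real.cos (((p.1:ℝ) - (p.2:ℝ)) * x) * w δ x))).symm
  simp only [hprod]
  rw [intervalIntegral.integral_finset_sum (fun (p : ℕ × ℕ) _ =>
    ((wcos_integrable hδ ((p.1:ℝ) - (p.2:ℝ))).const_mul (c p.1 * c p.2)))]
  rw [Finset.sum_congr rfl (fun (p : ℕ × ℕ) _ => intervalIntegral.integral_const_mul
    (c p.1 * c p.2) (fun x => Real.cos (((p.1:ℝ) - (p.2:ℝ)) * x) * w δ x))]
  rw [Finset.sum_product]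
  dsimp only
  rw [square_split N (fun j k => c j * c k * ∫ x in (0:ℝ)..π, Real.cos (((j:ℝ) - (k:ℝ)) * x) * w δ x)
    (fun j k => by
      have : ∀ y : ℝ, Real.cos (((j:ℝ) - (k:ℝ)) * y) = Real.cos (((k:ℝ) - (j:ℝ)) * y) := fun y => by
        rw [show ((j:ℝ) - k) * y = -(((k:ℝ) - j) * y) by ring, Real.cos_neg]
      simp only [this]
      ring)]
  have hdiag : ∀ j : ℕ, c j * c j * (∫ x in (0:ℝ)..π, Real.cos (((j:ℝ) - (j:ℝ)) * x) * w δ x)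
      = (c j)^2 * I0val δ := by
    intro j
    have := Ih hδ 0
    simp only [Nat.cast_zero] at this
    rw [sub_self, this]
    simp [pow_two]
  have hoff : ∀ j k : ℕ, k < j →
      c j * c k * (∫ x in (0:ℝ)..π, Real.cos (((j:ℝ) - (k:ℝ)) * x) * w δ x)
      = I0val δ * (c j * c k * ∏ i ∈ Finset.Icc 1 (j - k), ((δ + (i : ℝ) - 1) / ((i : ℝ) - δ))) := by
    intro j k hk
    rw [show ((j:ℝ) - (k:ℝ)) = (((j - k : ℕ) : ℝ)) by
      rw [Nat.cast_sub hk.le], Ih hδ (j - k)]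
    ring
  have e1 : ∑ j ∈ range N, c j * c j * (∫ x in (0:ℝ)..π, Real.cos (((j:ℝ) - (j:ℝ)) * x) * w δ x)
      = (∑ j ∈ range N, (c j)^2) * I0val δ := by
    rw [Finset.sum_mul]
    exact Finset.sum_congr rfl fun j _ => hdiag j
  have e2 : ∑ j ∈ range N, ∑ k ∈ range j,
        c j * c k * (∫ x in (0:ℝ)..π, Real.cos (((j:ℝ) - (k:ℝ)) * x) * w δ x)
      = I0val δ * ∑ j ∈ range N, ∑ k ∈ range j,
          c j * c k * ∏ i ∈ Finset.Icc 1 (j - k), ((δ + (i : ℝ) - 1) / ((i : ℝ) - δ)) := by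
    rw [Finset.mul_sum]
    refine Finset.sum_congr rfl fun j _ => ?_
    rw [Finset.mul_sum]
    exact Finset.sum_congr rfl fun k hk => hoff j k (Finset.mem_range.1 hk)
  rw [e1, e2, I0val]
  ring

end ExactKAux

open Real

theorem exact_K_ma_mis_specified_as_ar (p q0 : ℕ) (θ φ : ℕ → ℝ) (δ σ0 σ : ℝ)
    (hθ0 : θ 0 = 1) (hφ0 : φ 0 = 1)
    (hθz : ∀ s : ℕ, q0 < s → θ s = 0) (hφz : ∀ r : ℕ, p < r → φ r = 0)
    (hθroots : ∀ z : ℂ, ‖z‖ ≤ 1 →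
      (∑ s ∈ Finset.range (q0 + 1), (θ s : ℂ) * z ^ s) ≠ 0)
    (hφroots : ∀ z : ℂ, ‖z‖ ≤ 1 →
      (∑ r ∈ Finset.range (p + 1), (φ r : ℂ) * z ^ r) ≠ 0)
    (hδ : |δ| < 1/2) (hσ0 : 0 < σ0) (hσ : 0 < σ) :
    (σ0 / σ) * ∫ x in (0:ℝ)..π,
        (‖∑ j ∈ Finset.range (q0 + p + 1),
            ((∑ r ∈ Finset.range (j + 1), θ (j - r) * φ r : ℝ) : ℂ) *
              Complex.exp (Complex.I * (j : ℂ) * (x : ℂ))‖)^2 *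
          (2 * Real.sin (x / 2)) ^ (-(2 * δ))
      = π * (σ0 / σ) * (Real.Gamma (1 - 2 * δ) / (Real.Gamma (1 - δ))^2) *
          ((∑ j ∈ Finset.range (q0 + p + 1),
              (∑ r ∈ Finset.range (j + 1), θ (j - r) * φ r)^2)
            + 2 * ∑ j ∈ Finset.range (q0 + p + 1), ∑ k ∈ Finset.range j,
                (∑ r ∈ Finset.range (j + 1), θ (j - r) * φ r) *
                (∑ r ∈ Finset.range (k + 1), θ (k - r) * φ r) *
                ∏ i ∈ Finset.Icc 1 (j - k), ((δ + (i : ℝ) - 1) / ((i : ℝ) - δ))) := by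
  rw [ExactKAux.main_lemma hδ (q0 + p + 1) (fun j => ∑ r ∈ Finset.range (j + 1), θ (j - r) * φ r)]
  ring
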